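/- Let each truck j receive the subsidy p_j^t(x,z) = β(v_0 − (a·n_{x_j}(z,x)+b))·g(m_{x_j}(x)), so that its total utility becomes V_j(x,z) = ξ_j^t(x_j) + (a·n_{x_j}(z,x)+b) + β·v_0·g(m_{x_j}(x)), while cars have utility U_i(z,x) = ξ_i^c(z_i) + (a·n_{z_i}(z,x)+b). Then Ψ(x,z) = Σ_i ξ_i^c(z_i) + Σ_j ξ_j^t(x_j) + Σ_{r∈R} Σ_{k=1}^{n_r(x,z)}(ak+b) + β·v_0·Σ_{r∈R} Σ_{ℓ=1}^{m_r(x)} g(ℓ) is an exact potential function for the game, and hence the game admits a pure strategy Nash equilibrium. -/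
import Mathlib

lemma count_update {R : Type*} [DecidableEq R] {N : ℕ} (z : Fin N → R) (i : Fin N) (c r : R) :
    (Finset.univ.filter fun ℓ => Function.update z i c ℓ = r).card
      + (if z i = r then 1 else 0)
    = (Finset.univ.filter fun ℓ => z ℓ = r).card + (if c = r then 1 else 0) := by
  classical
  rw [Finset.card_filter, Finset.card_filter,
    ← Finset.add_sum_erase _ _ (Finset.mem_univ i),
    ← Finset.add_sum_erase _ _ (Finset.mem_univ i)]
  have h : ∀ ℓ ∈ Finset.univ.erase i,
      (if Function.update z i c ℓ = r then 1 else 0) = (if z ℓ = r then 1 else 0) := by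
    intro ℓ hℓ
    rw [Function.update_of_ne (Finset.ne_of_mem_erase hℓ)]
  rw [Finset.sum_congr rfl h, Function.update_self]
  omega

lemma sum_S_update {R : Type*} [Fintype R] [DecidableEq R] (f : ℕ → ℝ)
    (n n' : R → ℕ) (s t : R) (hst : s ≠ t)
    (h1 : n s = n' s + 1) (h2 : n' t = n t + 1) (h3 : ∀ r, r ≠ s → r ≠ t → n r = n' r) :
    (∑ r : R, ∑ k ∈ Finset.Icc 1 (n r), f k) - (∑ r : R, ∑ k ∈ Finset.Icc 1 (n' r), f k)
      = f (n s) - f (n' t) := by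
  classical
  rw [← Finset.sum_sub_distrib]
  have hsub : ({s, t} : Finset R) ⊆ Finset.univ := Finset.subset_univ _
  rw [← Finset.sum_subset hsub (by
    intro r _ hr
    simp only [Finset.mem_insert, Finset.mem_singleton, not_or] at hr
    rw [h3 r hr.1 hr.2, sub_self])]
  rw [Finset.sum_pair hst]
  have e1 : ∑ k ∈ Finset.Icc 1 (n s), f k = (∑ k ∈ Finset.Icc 1 (n' s), f k) + f (n s) := by
    rw [h1, Finset.sum_Icc_succ_top (by omega)]
  have e2 : ∑ k ∈ Finset.Icc 1 (n' t), f k = (∑ k ∈ Finset.Icc 1 (n t), f k) + f (n' t) := by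
    rw [h2, Finset.sum_Icc_succ_top (by omega)]
  rw [e1, e2]; ring

lemma sum_xi_update {R : Type*} [DecidableEq R] {N : ℕ} (ξ : Fin N → R → ℝ)
    (z : Fin N → R) (i : Fin N) (c : R) :
    (∑ i', ξ i' (z i')) - (∑ i', ξ i' (Function.update z i c i'))
      = ξ i (z i) - ξ i c := by
  rw [← Finset.add_sum_erase _ _ (Finset.mem_univ i),
    ← Finset.add_sum_erase _ (fun i' => ξ i' (Function.update z i c i')) (Finset.mem_univ i)]
  have h : ∀ ℓ ∈ Finset.univ.erase i,
      ξ ℓ (Function.update z i c ℓ) = ξ ℓ (z ℓ) := by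
    intro ℓ hℓ; rw [Function.update_of_ne (Finset.ne_of_mem_erase hℓ)]
  rw [Finset.sum_congr rfl h, Function.update_self]; ring

/-- `n_r(z,x)`: total number of vehicles using interval `r`. -/
def nCount {R : Type*} [DecidableEq R] {N M : ℕ}
    (z : Fin N → R) (x : Fin M → R) (r : R) : ℕ :=
  (Finset.univ.filter fun ℓ => z ℓ = r).card + (Finset.univ.filter fun ℓ => x ℓ = r).card

/-- `m_r(x)`: number of trucks using interval `r`. -/
def mCount {R : Type*} [DecidableEq R] {M : ℕ} (x : Fin M → R) (r : R) : ℕ :=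
  (Finset.univ.filter fun ℓ => x ℓ = r).card

/-- Car utility (no tax): `U_i(z,x) = ξ_i^c(z_i) + (a·n_{z_i}(z,x)+b)`. -/
def carU {R : Type*} [DecidableEq R] {N M : ℕ} (a b : ℝ)
    (ξc : Fin N → R → ℝ) (i : Fin N) (z : Fin N → R) (x : Fin M → R) : ℝ :=
  ξc i (z i) + (a * (nCount z x (z i) : ℝ) + b)

/-- Truck utility including the subsidy
`p_j^t(x,z) = β(v_0 − (a·n_{x_j}(z,x)+b))·g(m_{x_j}(x))`, which gives
`V_j(x,z) = ξ_j^t(x_j) + (a·n_{x_j}(z,x)+b) + β·v_0·g(m_{x_j}(x))`. -/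
def truckUsub {R : Type*} [DecidableEq R] {N M : ℕ} (a b β v0 : ℝ) (g : ℕ → ℝ)
    (ξt : Fin M → R → ℝ) (j : Fin M) (x : Fin M → R) (z : Fin N → R) : ℝ :=
  ξt j (x j) + (a * (nCount z x (x j) : ℝ) + b) + β * v0 * g (mCount x (x j))

/-- The candidate potential function of Theorem 2. -/
def Psi {R : Type*} [Fintype R] [DecidableEq R] {N M : ℕ} (a b β v0 : ℝ) (g : ℕ → ℝ)
    (ξc : Fin N → R → ℝ) (ξt : Fin M → R → ℝ)
    (x : Fin M → R) (z : Fin N → R) : ℝ :=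
  (∑ i, ξc i (z i)) + (∑ j, ξt j (x j))
    + (∑ r : R, ∑ k ∈ Finset.Icc 1 (nCount z x r), (a * (k : ℝ) + b))
    + β * v0 * ∑ r : R, ∑ ℓ ∈ Finset.Icc 1 (mCount x r), g ℓ

lemma car_potential {R : Type*} [Fintype R] [DecidableEq R] {N M : ℕ}
    (a b β v0 : ℝ) (g : ℕ → ℝ) (ξc : Fin N → R → ℝ) (ξt : Fin M → R → ℝ)
    (i : Fin N) (z : Fin N → R) (x : Fin M → R) (c : R) :
    Psi a b β v0 g ξc ξt x z - Psi a b β v0 g ξc ξt x (Function.update z i c)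
      = carU a b ξc i z x - carU a b ξc i (Function.update z i c) x := by
  by_cases hc : c = z i
  · rw [hc, Function.update_eq_self]; ring
  · have key : ∀ r, nCount (Function.update z i c) x r + (if z i = r then 1 else 0)
        = nCount z x r + (if c = r then 1 else 0) := by
      intro r
      have := count_update z i c r
      unfold nCount
      omega
    have h1 : nCount z x (z i) = nCount (Function.update z i c) x (z i) + 1 := by
      have := key (z i); simp [hc] at this; omega
    have h2 : nCount (Function.update z i c) x c = nCount z x c + 1 := by
      have hc' : ¬ (z i = c) := fun h => hc h.symm
      have := key c; simp [hc'] at this; omega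
    have h3 : ∀ r, r ≠ z i → r ≠ c → nCount z x r = nCount (Function.update z i c) x r := by
      intro r hr1 hr2
      have := key r; simp [hr1.symm, hr2.symm] at this; omega
    have hξ := sum_xi_update ξc z i c
    have hS := sum_S_update (fun k => a * (k : ℝ) + b) (nCount z x)
      (nCount (Function.update z i c) x) (z i) c (fun h => hc h.symm) h1 h2 h3
    unfold Psi carU
    simp only [Function.update_self]
    linear_combination hξ + hS

lemma truck_potential {R : Type*} [Fintype R] [DecidableEq R] {N M : ℕ}
    (a b β v0 : ℝ) (g : ℕ → ℝ) (ξc : Fin N → R → ℝ) (ξt : Fin M → R → ℝ)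
    (j : Fin M) (x : Fin M → R) (z : Fin N → R) (c : R) :
    Psi a b β v0 g ξc ξt x z - Psi a b β v0 g ξc ξt (Function.update x j c) z
      = truckUsub a b β v0 g ξt j x z
        - truckUsub a b β v0 g ξt j (Function.update x j c) z := by
  by_cases hc : c = x j
  · rw [hc, Function.update_eq_self]; ring
  · have keym : ∀ r, mCount (Function.update x j c) r + (if x j = r then 1 else 0)
        = mCount x r + (if c = r then 1 else 0) := by
      intro r
      have := count_update x j c r
      unfold mCount
      omega
    have keyn : ∀ r, nCount z (Function.update x j c) r + (if x j = r then 1 else 0)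
        = nCount z x r + (if c = r then 1 else 0) := by
      intro r
      have := count_update x j c r
      unfold nCount
      omega
    have hn1 : nCount z x (x j) = nCount z (Function.update x j c) (x j) + 1 := by
      have := keyn (x j); simp [hc] at this; omega
    have hn2 : nCount z (Function.update x j c) c = nCount z x c + 1 := by
      have hc' : ¬ (x j = c) := fun h => hc h.symm
      have := keyn c; simp [hc'] at this; omega
    have hn3 : ∀ r, r ≠ x j → r ≠ c → nCount z x r = nCount z (Function.update x j c) r := by
      intro r hr1 hr2
      have := keyn r; simp [hr1.symm, hr2.symm] at this; omega
    have hm1 : mCount x (x j) = mCount (Function.update x j c) (x j) + 1 := by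
      have := keym (x j); simp [hc] at this; omega
    have hm2 : mCount (Function.update x j c) c = mCount x c + 1 := by
      have hc' : ¬ (x j = c) := fun h => hc h.symm
      have := keym c; simp [hc'] at this; omega
    have hm3 : ∀ r, r ≠ x j → r ≠ c → mCount x r = mCount (Function.update x j c) r := by
      intro r hr1 hr2
      have := keym r; simp [hr1.symm, hr2.symm] at this; omega
    have hξ := sum_xi_update ξt x j c
    have hS := sum_S_update (fun k => a * (k : ℝ) + b) (nCount z x)
      (nCount z (Function.update x j c)) (x j) c (fun h => hc h.symm) hn1 hn2 hn3
    have hG := sum_S_update g (mCount x) (mCount (Function.update x j c)) (x j) c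
      (fun h => hc h.symm) hm1 hm2 hm3
    unfold Psi truckUsub
    simp only [Function.update_self]
    linear_combination hξ + hS + (β * v0) * hG

/-- under the truck platooning subsidy, `Ψ` is an exact potential
function for the car–truck congestion game, and hence the game admits a pure
strategy Nash equilibrium. -/
theorem subsidy_gives_potential_and_nash {R : Type*} [Fintype R] [DecidableEq R]
    [Nonempty R] {N M : ℕ} (a b β v0 : ℝ) (g : ℕ → ℝ)
    (ξc : Fin N → R → ℝ) (ξt : Fin M → R → ℝ) :
    ((∀ (i : Fin N) (z : Fin N → R) (x : Fin M → R) (c : R),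
        Psi a b β v0 g ξc ξt x z - Psi a b β v0 g ξc ξt x (Function.update z i c)
          = carU a b ξc i z x - carU a b ξc i (Function.update z i c) x) ∧
      (∀ (j : Fin M) (x : Fin M → R) (z : Fin N → R) (c : R),
        Psi a b β v0 g ξc ξt x z - Psi a b β v0 g ξc ξt (Function.update x j c) z
          = truckUsub a b β v0 g ξt j x z
            - truckUsub a b β v0 g ξt j (Function.update x j c) z)) ∧
    (∃ (z : Fin N → R) (x : Fin M → R),
      (∀ (i : Fin N) (c : R),
        carU a b ξc i (Function.update z i c) x ≤ carU a b ξc i z x) ∧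
      (∀ (j : Fin M) (c : R),
        truckUsub a b β v0 g ξt j (Function.update x j c) z
          ≤ truckUsub a b β v0 g ξt j x z)) := by
  refine ⟨⟨car_potential a b β v0 g ξc ξt, truck_potential a b β v0 g ξc ξt⟩, ?_⟩
  obtain ⟨p, hp⟩ := Finite.exists_max
    (fun p : (Fin N → R) × (Fin M → R) => Psi a b β v0 g ξc ξt p.2 p.1)
  refine ⟨p.1, p.2, ?_, ?_⟩
  · intro i c
    have h1 := car_potential a b β v0 g ξc ξt i p.1 p.2 c
    have h2 := hp (Function.update p.1 i c, p.2)
    simp only at h2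
    linarith
  · intro j c
    have h1 := truck_potential a b β v0 g ξc ξt j p.2 p.1 c
    have h2 := hp (p.1, Function.update p.2 j c)
    simp only at h2
    linarith
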